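/- Let (A, A*) be a tridiagonal pair on V with eigenspace orderings V_0, ..., V_d of A and V*_0, ..., V*_d of A*, and assume d ≥ 1. Let D denote the subalgebra of End(V) generated by A. If X ∈ D satisfies X V*_0 ⊆ V*_0 + V*_1, then there exist scalars r, s ∈ K such that X = rA + sI. -/

import Mathlib

open Polynomial

/-- A tridiagonal pair on `V`, with eigenspace orderings `Ev 0, ..., Ev d` of `A`
(with eigenvalues `θ 0, ..., θ d`) and `Ew 0, ..., Ew d` of `B = A*`
(with eigenvalues `θ' 0, ..., θ' d`).  For indices `i > d` we set `Ev i = ⊥`,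
`Ew i = ⊥`, encoding the conventions `V_{-1} = 0`, `V_{d+1} = 0`
(note `Ev (0 - 1) = Ev 0` by truncated subtraction, which is harmless in the
tridiagonal conditions below since `Ev i` appears in the sum anyway). -/
structure TridiagonalPair (K V : Type*) [Field K] [AddCommGroup V] [Module K V]
    [FiniteDimensional K V] where
  A : Module.End K V
  B : Module.End K V
  d : ℕ
  Ev : ℕ → Submodule K V
  Ew : ℕ → Submodule K V
  θ : ℕ → K
  θ' : ℕ → K
  hEv_eig : ∀ i ≤ d, Ev i = Module.End.eigenspace A (θ i)
  hEv_ne : ∀ i ≤ d, Ev i ≠ ⊥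
  hEv_all : ∀ μ : K, Module.End.eigenspace A μ ≠ ⊥ → ∃ i ≤ d, θ i = μ
  hθ_inj : ∀ i ≤ d, ∀ j ≤ d, θ i = θ j → i = j
  hEv_top : (⨆ i ∈ Finset.range (d + 1), Ev i) = ⊤
  hEv_bot : ∀ i, d < i → Ev i = ⊥
  hEw_eig : ∀ i ≤ d, Ew i = Module.End.eigenspace B (θ' i)
  hEw_ne : ∀ i ≤ d, Ew i ≠ ⊥
  hEw_all : ∀ μ : K, Module.End.eigenspace B μ ≠ ⊥ → ∃ i ≤ d, θ' i = μ
  hθ'_inj : ∀ i ≤ d, ∀ j ≤ d, θ' i = θ' j → i = j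
  hEw_top : (⨆ i ∈ Finset.range (d + 1), Ew i) = ⊤
  hEw_bot : ∀ i, d < i → Ew i = ⊥
  hTriB : ∀ i ≤ d, ∀ v ∈ Ev i, B v ∈ Ev (i - 1) ⊔ Ev i ⊔ Ev (i + 1)
  hTriA : ∀ i ≤ d, ∀ v ∈ Ew i, A v ∈ Ew (i - 1) ⊔ Ew i ⊔ Ew (i + 1)
  hIrr : ∀ W : Submodule K V, (∀ v ∈ W, A v ∈ W) → (∀ v ∈ W, B v ∈ W) →
    W = ⊥ ∨ W = ⊤

/-- The polynomial `τ_i = (λ - θ_0)(λ - θ_1) ⋯ (λ - θ_{i-1})`. -/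
noncomputable def tau {K : Type*} [Field K] (θ : ℕ → K) (i : ℕ) : Polynomial K :=
  ∏ k ∈ Finset.range i, (X - C (θ k))

section TD
variable {K V : Type*} [Field K] [AddCommGroup V] [Module K V] [FiniteDimensional K V]

/-- `V*_0 + ... + V*_{k-1}` -/
def TDFs (p : TridiagonalPair K V) (k : ℕ) : Submodule K V := ⨆ j ∈ Finset.range k, p.Ew j
/-- `V_k + ... + V_d` -/
def TDGs (p : TridiagonalPair K V) (k : ℕ) : Submodule K V := ⨆ j ∈ Finset.Icc k p.d, p.Ev j
/-- `V_0 + ... + V_{k-1}` -/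
def TDFt (p : TridiagonalPair K V) (k : ℕ) : Submodule K V := ⨆ j ∈ Finset.range k, p.Ev j

variable (p : TridiagonalPair K V)

lemma Ew_le_Fs {j k : ℕ} (h : j < k) : p.Ew j ≤ TDFs p k :=
  le_iSup₂ (f := fun j (_ : j ∈ Finset.range k) => p.Ew j) j (Finset.mem_range.mpr h)

lemma Ev_le_Gs {j k : ℕ} (h1 : k ≤ j) (h2 : j ≤ p.d) : p.Ev j ≤ TDGs p k :=
  le_iSup₂ (f := fun j (_ : j ∈ Finset.Icc k p.d) => p.Ev j) j (Finset.mem_Icc.mpr ⟨h1, h2⟩)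

lemma Ev_le_Ft {j k : ℕ} (h : j < k) : p.Ev j ≤ TDFt p k :=
  le_iSup₂ (f := fun j (_ : j ∈ Finset.range k) => p.Ev j) j (Finset.mem_range.mpr h)

lemma Fs_mono {k l : ℕ} (h : k ≤ l) : TDFs p k ≤ TDFs p l :=
  iSup₂_le fun j hj => Ew_le_Fs p (lt_of_lt_of_le (Finset.mem_range.mp hj) h)

lemma Gs_anti {k l : ℕ} (h : k ≤ l) : TDGs p l ≤ TDGs p k :=
  iSup₂_le fun j hj => by
    obtain ⟨h1, h2⟩ := Finset.mem_Icc.mp hj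
    exact Ev_le_Gs p (le_trans h h1) h2

lemma Ft_mono {k l : ℕ} (h : k ≤ l) : TDFt p k ≤ TDFt p l :=
  iSup₂_le fun j hj => Ev_le_Ft p (lt_of_lt_of_le (Finset.mem_range.mp hj) h)

lemma Fs_zero : TDFs p 0 = ⊥ := by simp [TDFs]
lemma Ft_zero : TDFt p 0 = ⊥ := by simp [TDFt]
lemma Gs_bot {k : ℕ} (h : p.d < k) : TDGs p k = ⊥ := by
  unfold TDGs
  rw [Finset.Icc_eq_empty (by omega)]
  simp

lemma Fs_one : TDFs p 1 = p.Ew 0 := by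
  apply le_antisymm
  · exact iSup₂_le fun j hj => by
      have : j = 0 := by simpa using Finset.mem_range.mp hj
      subst this; exact le_rfl
  · exact Ew_le_Fs p one_pos

lemma Gs_zero_top : TDGs p 0 = ⊤ := by
  rw [← p.hEv_top]
  apply le_antisymm
  · exact iSup₂_le fun j hj => by
      obtain ⟨_, h2⟩ := Finset.mem_Icc.mp hj
      exact le_iSup₂ (f := fun j (_ : j ∈ Finset.range (p.d+1)) => p.Ev j) j
        (Finset.mem_range.mpr (by omega))
  · exact iSup₂_le fun j hj => Ev_le_Gs p (Nat.zero_le _) (by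
      have := Finset.mem_range.mp hj; omega)

lemma Fs_top {k : ℕ} (h : p.d < k) : TDFs p k = ⊤ := by
  rw [← p.hEw_top]
  apply le_antisymm
  · rw [p.hEw_top]; exact le_top
  · exact iSup₂_le fun j hj => Ew_le_Fs p (by have := Finset.mem_range.mp hj; omega)

-- eigenvalue action
lemma A_eigen {i : ℕ} (hi : i ≤ p.d) {v : V} (hv : v ∈ p.Ev i) : p.A v = p.θ i • v := by
  rw [p.hEv_eig i hi] at hv
  exact Module.End.mem_eigenspace_iff.mp hv

lemma B_eigen {i : ℕ} (hi : i ≤ p.d) {v : V} (hv : v ∈ p.Ew i) : p.B v = p.θ' i • v := by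
  rw [p.hEw_eig i hi] at hv
  exact Module.End.mem_eigenspace_iff.mp hv

lemma aeval_eigen {i : ℕ} (hi : i ≤ p.d) {v : V} (hv : v ∈ p.Ev i) (q : Polynomial K) :
    (aeval p.A q) v = q.eval (p.θ i) • v := by
  induction q using Polynomial.induction_on with
  | C a => simp [Algebra.algebraMap_eq_smul_one]
  | add q r hq hr => simp [hq, hr, add_smul]
  | monomial n a ih =>
      have h1 : (aeval p.A) (C a * X ^ (n+1)) = (aeval p.A) (C a * X ^ n) * p.A := by
        rw [pow_succ, ← mul_assoc, map_mul, aeval_X]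
      rw [h1, Module.End.mul_apply, A_eigen p hi hv, map_smul, ih, smul_smul]
      congr 1
      simp [pow_succ]
      ring

lemma Ev_le_Gs' {j k : ℕ} (h1 : k ≤ j) : p.Ev j ≤ TDGs p k := by
  by_cases h2 : j ≤ p.d
  · exact Ev_le_Gs p h1 h2
  · rw [p.hEv_bot j (by omega)]; exact bot_le

lemma A_Fs {k : ℕ} {v : V} (hv : v ∈ TDFs p k) : p.A v ∈ TDFs p (k+1) := by
  have hle : TDFs p k ≤ Submodule.comap p.A (TDFs p (k+1)) := by
    refine iSup₂_le fun j hj => fun w hw => Submodule.mem_comap.mpr ?_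
    have hjk : j < k := Finset.mem_range.mp hj
    by_cases hjd : j ≤ p.d
    · have h := p.hTriA j hjd w hw
      have hle2 : p.Ew (j-1) ⊔ p.Ew j ⊔ p.Ew (j+1) ≤ TDFs p (k+1) :=
        sup_le (sup_le (Ew_le_Fs p (by omega)) (Ew_le_Fs p (by omega))) (Ew_le_Fs p (by omega))
      exact hle2 h
    · have : w = 0 := by rw [p.hEw_bot j (by omega)] at hw; simpa using hw
      simp [this]
  exact hle hv

lemma A_shift_Fs (c : K) {k : ℕ} {v : V} (hv : v ∈ TDFs p k) :
    p.A v - c • v ∈ TDFs p (k+1) :=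
  Submodule.sub_mem _ (A_Fs p hv) (Submodule.smul_mem _ _ (Fs_mono p (Nat.le_succ k) hv))

lemma B_shift_Fs {k : ℕ} {v : V} (hv : v ∈ TDFs p (k+1)) :
    p.B v - p.θ' k • v ∈ TDFs p k := by
  have hle : TDFs p (k+1) ≤ Submodule.comap (p.B - p.θ' k • 1) (TDFs p k) := by
    refine iSup₂_le fun j hj => fun w hw => Submodule.mem_comap.mpr ?_
    have hjk : j ≤ k := by have := Finset.mem_range.mp hj; omega
    by_cases hjd : j ≤ p.d
    · have hB := B_eigen p hjd hw
      have heq : (p.B - p.θ' k • 1) w = (p.θ' j - p.θ' k) • w := by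
        simp [LinearMap.sub_apply, hB, sub_smul]
      rw [heq]
      rcases eq_or_lt_of_le hjk with rfl | hlt
      · simp
      · exact Submodule.smul_mem _ _ (Ew_le_Fs p hlt hw)
    · have : w = 0 := by rw [p.hEw_bot j (by omega)] at hw; simpa using hw
      simp [this]
  simpa [LinearMap.sub_apply] using hle hv

lemma A_shift_Gs {k : ℕ} {v : V} (hv : v ∈ TDGs p k) :
    p.A v - p.θ k • v ∈ TDGs p (k+1) := by
  have hle : TDGs p k ≤ Submodule.comap (p.A - p.θ k • 1) (TDGs p (k+1)) := by
    refine iSup₂_le fun j hj => fun w hw => Submodule.mem_comap.mpr ?_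
    obtain ⟨h1, h2⟩ := Finset.mem_Icc.mp hj
    have hA := A_eigen p h2 hw
    have heq : (p.A - p.θ k • 1) w = (p.θ j - p.θ k) • w := by
      simp [LinearMap.sub_apply, hA, sub_smul]
    rw [heq]
    rcases eq_or_lt_of_le h1 with rfl | hlt
    · simp
    · exact Submodule.smul_mem _ _ (Ev_le_Gs p hlt h2 hw)
  simpa [LinearMap.sub_apply] using hle hv

lemma B_Gs {k : ℕ} {v : V} (hv : v ∈ TDGs p (k+1)) : p.B v ∈ TDGs p k := by
  have hle : TDGs p (k+1) ≤ Submodule.comap p.B (TDGs p k) := by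
    refine iSup₂_le fun j hj => fun w hw => Submodule.mem_comap.mpr ?_
    obtain ⟨h1, h2⟩ := Finset.mem_Icc.mp hj
    have h := p.hTriB j h2 w hw
    have hle2 : p.Ev (j-1) ⊔ p.Ev j ⊔ p.Ev (j+1) ≤ TDGs p k :=
      sup_le (sup_le (Ev_le_Gs' p (by omega)) (Ev_le_Gs' p (by omega))) (Ev_le_Gs' p (by omega))
    exact hle2 h
  exact hle hv

lemma A_shift_Ft {k : ℕ} {v : V} (hv : v ∈ TDFt p (k+1)) :
    p.A v - p.θ k • v ∈ TDFt p k := by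
  have hle : TDFt p (k+1) ≤ Submodule.comap (p.A - p.θ k • 1) (TDFt p k) := by
    refine iSup₂_le fun j hj => fun w hw => Submodule.mem_comap.mpr ?_
    have hjk : j ≤ k := by have := Finset.mem_range.mp hj; omega
    by_cases hjd : j ≤ p.d
    · have hA := A_eigen p hjd hw
      have heq : (p.A - p.θ k • 1) w = (p.θ j - p.θ k) • w := by
        simp [LinearMap.sub_apply, hA, sub_smul]
      rw [heq]
      rcases eq_or_lt_of_le hjk with rfl | hlt
      · simp
      · exact Submodule.smul_mem _ _ (Ev_le_Ft p hlt hw)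
    · have : w = 0 := by rw [p.hEv_bot j (by omega)] at hw; simpa using hw
      simp [this]
  simpa [LinearMap.sub_apply] using hle hv

lemma B_Ft {k : ℕ} {v : V} (hv : v ∈ TDFt p k) : p.B v ∈ TDFt p (k+1) := by
  have hle : TDFt p k ≤ Submodule.comap p.B (TDFt p (k+1)) := by
    refine iSup₂_le fun j hj => fun w hw => Submodule.mem_comap.mpr ?_
    have hjk : j < k := Finset.mem_range.mp hj
    by_cases hjd : j ≤ p.d
    · have h := p.hTriB j hjd w hw
      have hle2 : p.Ev (j-1) ⊔ p.Ev j ⊔ p.Ev (j+1) ≤ TDFt p (k+1) :=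
        sup_le (sup_le (Ev_le_Ft p (by omega)) (Ev_le_Ft p (by omega))) (Ev_le_Ft p (by omega))
      exact hle2 h
    · have : w = 0 := by rw [p.hEv_bot j (by omega)] at hw; simpa using hw
      simp [this]
  exact hle hv


lemma tau_succ_apply (h : ℕ) (v : V) :
    aeval p.A (tau p.θ (h+1)) v = aeval p.A (tau p.θ h) (p.A v - p.θ h • v) := by
  have : tau p.θ (h+1) = tau p.θ h * (X - C (p.θ h)) := Finset.prod_range_succ _ _
  rw [this, map_mul, Module.End.mul_apply]
  congr 1
  simp [Algebra.algebraMap_eq_smul_one]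

lemma tau_succ_apply' (h : ℕ) (v : V) :
    aeval p.A (tau p.θ (h+1)) v =
      p.A (aeval p.A (tau p.θ h) v) - p.θ h • (aeval p.A (tau p.θ h) v) := by
  have : tau p.θ (h+1) = (X - C (p.θ h)) * tau p.θ h := by
    rw [mul_comm]; exact Finset.prod_range_succ _ _
  rw [this, map_mul, Module.End.mul_apply]
  simp [Algebra.algebraMap_eq_smul_one]

lemma tau_zero_apply (v : V) : aeval p.A (tau p.θ 0) v = v := by
  simp [tau]

lemma tau_mem_Fs (h : ℕ) : ∀ (k : ℕ) (v : V), v ∈ TDFs p k →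
    aeval p.A (tau p.θ h) v ∈ TDFs p (k+h) := by
  induction h with
  | zero => intro k v hv; simpa [tau_zero_apply] using hv
  | succ n ih =>
      intro k v hv
      rw [tau_succ_apply]
      have h1 : p.A v - p.θ n • v ∈ TDFs p (k+1) := A_shift_Fs p _ hv
      have h2 := ih (k+1) _ h1
      have : k + 1 + n = k + (n+1) := by omega
      rwa [this] at h2

lemma tau_mem_Gs (h : ℕ) (v : V) : aeval p.A (tau p.θ h) v ∈ TDGs p h := by
  induction h with
  | zero => rw [Gs_zero_top]; exact Submodule.mem_top
  | succ n ih =>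
      rw [tau_succ_apply']
      exact A_shift_Gs p ih

lemma tau_eval_self_ne {i : ℕ} (hi : i ≤ p.d) : (tau p.θ i).eval (p.θ i) ≠ 0 := by
  rw [tau, eval_prod]
  refine Finset.prod_ne_zero_iff.mpr fun k hk => ?_
  have hk' : k < i := Finset.mem_range.mp hk
  simp only [eval_sub, eval_X, eval_C]
  exact sub_ne_zero.mpr fun he => by
    have := p.hθ_inj i hi k (by omega) he; omega

lemma tau_eval_zero {h i : ℕ} (hih : i < h) : (tau p.θ h).eval (p.θ i) = 0 := by
  rw [tau, eval_prod]
  exact Finset.prod_eq_zero (Finset.mem_range.mpr hih) (by simp)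

lemma Gs_one_ne_top : TDGs p 1 ≠ ⊤ := by
  intro htop
  obtain ⟨v0, hv0, hv0ne⟩ := (Submodule.ne_bot_iff _).mp (p.hEv_ne 0 (Nat.zero_le _))
  set q : Polynomial K := ∏ i ∈ Finset.Icc 1 p.d, (X - C (p.θ i)) with hq
  have hker : TDGs p 1 ≤ Submodule.comap (aeval p.A q) ⊥ := by
    refine iSup₂_le fun j hj => fun w hw => Submodule.mem_comap.mpr ?_
    obtain ⟨h1, h2⟩ := Finset.mem_Icc.mp hj
    rw [aeval_eigen p h2 hw]
    have hz : q.eval (p.θ j) = 0 := by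
      rw [hq, eval_prod]; exact Finset.prod_eq_zero hj (by simp)
    simp [hz]
  have hmem : v0 ∈ TDGs p 1 := by rw [htop]; trivial
  have h0 : (aeval p.A q) v0 = 0 := by simpa using hker hmem
  rw [aeval_eigen p (Nat.zero_le _) hv0] at h0
  have hne : q.eval (p.θ 0) ≠ 0 := by
    rw [hq, eval_prod]
    refine Finset.prod_ne_zero_iff.mpr fun i hi => ?_
    obtain ⟨h1, h2⟩ := Finset.mem_Icc.mp hi
    simp only [eval_sub, eval_X, eval_C]
    exact sub_ne_zero.mpr fun he => by
      have := p.hθ_inj 0 (Nat.zero_le _) i h2 he; omega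
  rcases smul_eq_zero.mp h0 with h | h
  · exact hne h
  · exact hv0ne h

lemma Ft_d_ne_top : TDFt p p.d ≠ ⊤ := by
  intro htop
  obtain ⟨vd, hvd, hvdne⟩ := (Submodule.ne_bot_iff _).mp (p.hEv_ne p.d le_rfl)
  have hker : TDFt p p.d ≤ Submodule.comap (aeval p.A (tau p.θ p.d)) ⊥ := by
    refine iSup₂_le fun j hj => fun w hw => Submodule.mem_comap.mpr ?_
    have hj' : j < p.d := Finset.mem_range.mp hj
    rw [aeval_eigen p (by omega) hw, tau_eval_zero p hj']
    simp
  have hmem : vd ∈ TDFt p p.d := by rw [htop]; trivial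
  have h0 : (aeval p.A (tau p.θ p.d)) vd = 0 := by simpa using hker hmem
  rw [aeval_eigen p le_rfl hvd] at h0
  rcases smul_eq_zero.mp h0 with h | h
  · exact tau_eval_self_ne p le_rfl h
  · exact hvdne h


lemma fact1 {m : ℕ} (hm : 1 ≤ m) : TDFs p m ⊓ TDGs p m = ⊥ := by
  by_cases hmd : m ≤ p.d + 1
  swap
  · rw [Gs_bot p (by omega)]; exact inf_bot_eq _
  set P : ℕ → Submodule K V := fun i => TDFs p (i+1) ⊓ TDGs p (i+1) with hP
  set W : Submodule K V := ⨆ i ∈ Finset.range (p.d+1), P i with hW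
  have hPW : ∀ i, i < p.d + 1 → P i ≤ W := fun i hi =>
    le_iSup₂ (f := fun i (_ : i ∈ Finset.range (p.d+1)) => P i) i (Finset.mem_range.mpr hi)
  have hWle : W ≤ Submodule.comap p.A W ⊓ Submodule.comap p.B W := by
    refine iSup₂_le fun i hi => fun w hw => ?_
    have hi' : i < p.d + 1 := Finset.mem_range.mp hi
    obtain ⟨hw1, hw2⟩ := hw
    have heqA : p.A w = (p.A w - p.θ (i+1) • w) + p.θ (i+1) • w := by abel
    have heqB : p.B w = (p.B w - p.θ' i • w) + p.θ' i • w := by abel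
    constructor
    · simp only [SetLike.mem_coe, Submodule.mem_comap]
      rw [heqA]
      have h1 : p.A w - p.θ (i+1) • w ∈ P (i+1) :=
        ⟨A_shift_Fs p _ hw1, A_shift_Gs p hw2⟩
      refine Submodule.add_mem _ ?_ (Submodule.smul_mem _ _ (hPW _ hi' ⟨hw1, hw2⟩))
      by_cases hid : i + 1 < p.d + 1
      · exact hPW _ hid h1
      · have hz : p.A w - p.θ (i+1) • w = 0 := by
          have h2 := h1.2
          rw [Gs_bot p (by omega)] at h2
          simpa using h2
        rw [hz]; exact Submodule.zero_mem _
    · simp only [SetLike.mem_coe, Submodule.mem_comap]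
      rw [heqB]
      refine Submodule.add_mem _ ?_ (Submodule.smul_mem _ _ (hPW _ hi' ⟨hw1, hw2⟩))
      have hB1 : p.B w - p.θ' i • w ∈ TDFs p i := B_shift_Fs p hw1
      have hB2 : p.B w - p.θ' i • w ∈ TDGs p i := by
        refine Submodule.sub_mem _ (B_Gs p hw2) (Submodule.smul_mem _ _ ?_)
        exact Gs_anti p (Nat.le_succ i) hw2
      cases i with
      | zero =>
          have hz : p.B w - p.θ' 0 • w = 0 := by
            rw [Fs_zero p] at hB1; simpa using hB1
          rw [hz]; exact Submodule.zero_mem _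
      | succ j =>
          exact hPW j (by omega) ⟨hB1, hB2⟩
  have hcases := p.hIrr W (fun v hv => (hWle hv).1) (fun v hv => (hWle hv).2)
  rcases hcases with hbot | htop
  · have hle : P (m-1) ≤ W := hPW (m-1) (by omega)
    rw [hbot, le_bot_iff] at hle
    have hm1 : m - 1 + 1 = m := by omega
    rw [hP] at hle
    simp only [hm1] at hle
    exact hle
  · exfalso
    apply Gs_one_ne_top p
    rw [← top_le_iff, ← htop]
    exact iSup₂_le fun i hi => le_trans inf_le_right (Gs_anti p (by omega))

lemma fact2 : p.Ew 0 ⊓ TDFt p p.d = ⊥ := by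
  set Q : ℕ → Submodule K V := fun i => TDFs p (i+1) ⊓ TDFt p (p.d - i) with hQ
  set W : Submodule K V := ⨆ i ∈ Finset.range (p.d+1), Q i with hW
  have hQW : ∀ i, i < p.d + 1 → Q i ≤ W := fun i hi =>
    le_iSup₂ (f := fun i (_ : i ∈ Finset.range (p.d+1)) => Q i) i (Finset.mem_range.mpr hi)
  have hWle : W ≤ Submodule.comap p.A W ⊓ Submodule.comap p.B W := by
    refine iSup₂_le fun i hi => fun w hw => ?_
    have hi' : i < p.d + 1 := Finset.mem_range.mp hi
    obtain ⟨hw1, hw2⟩ := hw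
    constructor
    · simp only [SetLike.mem_coe, Submodule.mem_comap]
      by_cases hid : i < p.d
      · have heqA : p.A w = (p.A w - p.θ (p.d - 1 - i) • w) + p.θ (p.d - 1 - i) • w := by abel
        rw [heqA]
        refine Submodule.add_mem _ ?_ (Submodule.smul_mem _ _ (hQW _ hi' ⟨hw1, hw2⟩))
        have hsub : p.d - i = (p.d - 1 - i) + 1 := by omega
        rw [hsub] at hw2
        have h1 : p.A w - p.θ (p.d - 1 - i) • w ∈ Q (i+1) := by
          refine ⟨A_shift_Fs p _ hw1, ?_⟩
          have := A_shift_Ft p hw2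
          rw [show p.d - (i+1) = p.d - 1 - i from by omega]
          exact this
        exact hQW _ (by omega) h1
      · have hz : w = 0 := by
          have : p.d - i = 0 := by omega
          rw [this, Ft_zero p] at hw2
          simpa using hw2
        simp [hz]
    · simp only [SetLike.mem_coe, Submodule.mem_comap]
      have heqB : p.B w = (p.B w - p.θ' i • w) + p.θ' i • w := by abel
      rw [heqB]
      refine Submodule.add_mem _ ?_ (Submodule.smul_mem _ _ (hQW _ hi' ⟨hw1, hw2⟩))
      have hB1 : p.B w - p.θ' i • w ∈ TDFs p i := B_shift_Fs p hw1
      cases i with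
      | zero =>
          have hz : p.B w - p.θ' 0 • w = 0 := by
            rw [Fs_zero p] at hB1; simpa using hB1
          rw [hz]; exact Submodule.zero_mem _
      | succ j =>
          have hB2 : p.B w - p.θ' (j+1) • w ∈ TDFt p (p.d - j) := by
            refine Submodule.sub_mem _ ?_ (Submodule.smul_mem _ _ ?_)
            · have := B_Ft p hw2
              have hsub : p.d - (j+1) + 1 ≤ p.d - j := by omega
              · exact Ft_mono p hsub this
            · exact Ft_mono p (by omega) hw2
          exact hQW j (by omega) ⟨hB1, hB2⟩
  have hcases := p.hIrr W (fun v hv => (hWle hv).1) (fun v hv => (hWle hv).2)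
  rcases hcases with hbot | htop
  · have hle : Q 0 ≤ W := hQW 0 (by omega)
    rw [hbot, le_bot_iff] at hle
    rw [hQ] at hle
    simp only [Nat.sub_zero] at hle
    rw [Fs_one p] at hle
    exact hle
  · exfalso
    apply Ft_d_ne_top p
    rw [← top_le_iff, ← htop]
    exact iSup₂_le fun i hi => le_trans inf_le_right (Ft_mono p (by omega))


lemma kerTau {h : ℕ} (hh : h ≤ p.d) {v : V} (hv : aeval p.A (tau p.θ h) v = 0) :
    v ∈ TDFt p h := by
  set q : Polynomial K := ∏ i ∈ Finset.Icc h p.d, (X - C (p.θ i)) with hq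
  have hcop : IsCoprime (tau p.θ h) q := by
    rw [tau]
    refine IsCoprime.prod_left fun k hk => ?_
    refine IsCoprime.prod_right fun i hi => ?_
    have hk' : k < h := Finset.mem_range.mp hk
    obtain ⟨h1, h2⟩ := Finset.mem_Icc.mp hi
    refine isCoprime_X_sub_C_of_isUnit_sub (isUnit_iff_ne_zero.mpr ?_)
    exact sub_ne_zero.mpr fun he => by
      have := p.hθ_inj k (by omega) i h2 he; omega
  obtain ⟨α, β, hαβ⟩ := hcop
  have hv1 : v = (aeval p.A β) ((aeval p.A q) v) := by
    have h1 : (aeval p.A (α * tau p.θ h + β * q)) v = v := by rw [hαβ]; simp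
    simp only [map_add, map_mul, LinearMap.add_apply, Module.End.mul_apply,
      hv, map_zero, zero_add] at h1
    exact h1.symm
  have hqv : (aeval p.A q) v ∈ TDFt p h := by
    have htop : (⊤ : Submodule K V) ≤ Submodule.comap (aeval p.A q) (TDFt p h) := by
      rw [← p.hEv_top]
      refine iSup₂_le fun j hj => fun w hw => Submodule.mem_comap.mpr ?_
      have hj' : j < p.d + 1 := Finset.mem_range.mp hj
      rw [aeval_eigen p (by omega) hw]
      by_cases hjh : j < h
      · exact Submodule.smul_mem _ _ (Ev_le_Ft p hjh hw)
      · have hz : q.eval (p.θ j) = 0 := by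
          rw [hq, eval_prod]
          exact Finset.prod_eq_zero (i := j) (Finset.mem_Icc.mpr ⟨by omega, by omega⟩) (by simp)
        simp [hz]
    exact Submodule.mem_comap.mp (htop Submodule.mem_top)
  have hβ : TDFt p h ≤ Submodule.comap (aeval p.A β) (TDFt p h) := by
    refine iSup₂_le fun j hj => fun u hu => Submodule.mem_comap.mpr ?_
    have hj' : j < h := Finset.mem_range.mp hj
    rw [aeval_eigen p (by omega) hu]
    exact Submodule.smul_mem _ _ (Ev_le_Ft p hj' hu)
  rw [hv1]
  exact Submodule.mem_comap.mp (hβ hqv)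

lemma end_eq_of_eigen (S T : Module.End K V)
    (hst : ∀ i ≤ p.d, ∀ v ∈ p.Ev i, S v = T v) : S = T := by
  have hker : (⊤ : Submodule K V) ≤ LinearMap.ker (S - T) := by
    rw [← p.hEv_top]
    refine iSup₂_le fun i hi => fun v hv => ?_
    have hi' : i < p.d + 1 := Finset.mem_range.mp hi
    rw [LinearMap.mem_ker, LinearMap.sub_apply,
      hst i (by omega) v hv, sub_self]
  ext v
  have := hker (Submodule.mem_top (x := v))
  rw [LinearMap.mem_ker, LinearMap.sub_apply, sub_eq_zero] at this
  exact this


noncomputable def newton (θ : ℕ → K) (f : Polynomial K) : ℕ → K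
  | h => (f.eval (θ h) - ∑ l ∈ (Finset.range h).attach,
      newton θ f l.1 * (tau θ l.1).eval (θ h)) / (tau θ h).eval (θ h)
  decreasing_by exact Finset.mem_range.mp l.2

lemma newton_eq (θ : ℕ → K) (f : Polynomial K) (h : ℕ) :
    newton θ f h = (f.eval (θ h) - ∑ l ∈ Finset.range h,
      newton θ f l * (tau θ l).eval (θ h)) / (tau θ h).eval (θ h) := by
  rw [newton, Finset.sum_attach (Finset.range h) (fun l => newton θ f l * (tau θ l).eval (θ h))]

lemma newton_spec (θ : ℕ → K) (f : Polynomial K) (h : ℕ)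
    (hne : (tau θ h).eval (θ h) ≠ 0) :
    newton θ f h * (tau θ h).eval (θ h) = f.eval (θ h) - ∑ l ∈ Finset.range h,
      newton θ f l * (tau θ l).eval (θ h) := by
  rw [newton_eq, div_mul_cancel₀ _ hne]

lemma newton_sum_eval (f : Polynomial K) {i : ℕ} (hi : i ≤ p.d) :
    ∑ h ∈ Finset.range (p.d+1), newton p.θ f h * (tau p.θ h).eval (p.θ i)
      = f.eval (p.θ i) := by
  have hsub : Finset.range (i+1) ⊆ Finset.range (p.d+1) := Finset.range_subset_range.mpr (by omega)
  rw [← Finset.sum_subset hsub (fun x hx hnx => by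
    have hix : i < x := by
      simp only [Finset.mem_range] at hx hnx; omega
    rw [tau_eval_zero p hix, mul_zero])]
  rw [Finset.sum_range_succ, newton_spec _ _ _ (tau_eval_self_ne p hi)]
  ring

end TD

/-- Assume `d ≥ 1`.  If `X ∈ D` satisfies `X V*_0 ⊆ V*_0 + V*_1`, then there
exist `r, s ∈ K` with `X = r A + s I`. -/
theorem stmt7 {K V : Type*} [Field K] [AddCommGroup V] [Module K V]
    [FiniteDimensional K V] (hpos : 0 < Module.finrank K V)
    (p : TridiagonalPair K V)
    (hd : 1 ≤ p.d) (X : Module.End K V) (hX : X ∈ Algebra.adjoin K {p.A})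
    (hXV : ∀ v ∈ p.Ew 0, X v ∈ p.Ew 0 ⊔ p.Ew 1) :
    ∃ r s : K, X = r • p.A + s • (1 : Module.End K V) := by
  rw [Algebra.adjoin_singleton_eq_range_aeval] at hX
  obtain ⟨f, hf0⟩ := hX
  have hf : aeval p.A f = X := hf0
  set c : ℕ → K := newton p.θ f with hc
  set T : ℕ → Module.End K V := fun h => aeval p.A (tau p.θ h) with hT
  have hXsum : X = ∑ h ∈ Finset.range (p.d+1), c h • T h := by
    refine end_eq_of_eigen p _ _ ?_
    intro i hi v hv
    rw [← hf, aeval_eigen p hi hv, LinearMap.sum_apply]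
    have hterm : ∀ h ∈ Finset.range (p.d+1),
        (c h • T h) v = (c h * (tau p.θ h).eval (p.θ i)) • v := by
      intro h _
      have hTv : T h v = (tau p.θ h).eval (p.θ i) • v := aeval_eigen p hi hv _
      rw [LinearMap.smul_apply, hTv, smul_smul]
    rw [Finset.sum_congr rfl hterm, ← Finset.sum_smul, newton_sum_eval p f hi]
  have hXV2 : ∀ v ∈ p.Ew 0, X v ∈ TDFs p 2 := by
    intro v hv
    exact (sup_le (Ew_le_Fs p (by omega)) (Ew_le_Fs p (by omega))) (hXV v hv)
  have hT0 : ∀ v : V, T 0 v = v := fun v => tau_zero_apply p v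
  have hT1 : ∀ v : V, T 1 v = p.A v - p.θ 0 • v := by
    intro v
    have : T 1 v = aeval p.A (tau p.θ (0+1)) v := rfl
    rw [this, tau_succ_apply]
    rw [tau_zero_apply]
  have hS : ∀ j : ℕ, ∀ v ∈ p.Ew 0,
      ∑ h ∈ Finset.Icc 2 (p.d - j), c h • T h v = 0 := by
    intro j
    induction j with
    | zero =>
        intro v hv
        have hv1 : v ∈ TDFs p 1 := Ew_le_Fs p (by omega) hv
        simp only [Nat.sub_zero]
        have hXapp : X v = ∑ h ∈ Finset.range (p.d+1), c h • T h v := by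
          rw [hXsum, LinearMap.sum_apply]
          simp only [LinearMap.smul_apply]
        have hico : Finset.Ico 0 2 = Finset.range 2 := by rw [Finset.range_eq_Ico]
        have hsplit : ∑ h ∈ Finset.range (p.d+1), c h • T h v
            = (c 0 • T 0 v + c 1 • T 1 v) + ∑ h ∈ Finset.Icc 2 p.d, c h • T h v := by
          have h1 : ∑ h ∈ Finset.Ico 0 2, c h • T h v
              + ∑ h ∈ Finset.Ico 2 (p.d+1), c h • T h v
              = ∑ h ∈ Finset.Ico 0 (p.d+1), c h • T h v :=
            Finset.sum_Ico_consecutive _ (by omega) (by omega)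
          rw [Finset.range_eq_Ico, ← h1, hico, Finset.sum_range_succ,
            Finset.sum_range_one, Finset.Ico_add_one_right_eq_Icc]
        have hwFs : ∑ h ∈ Finset.Icc 2 p.d, c h • T h v ∈ TDFs p 2 := by
          have heq : ∑ h ∈ Finset.Icc 2 p.d, c h • T h v
              = X v - c 0 • T 0 v - c 1 • T 1 v := by
            rw [hXapp, hsplit]; abel
          rw [heq, hT0, hT1]
          refine Submodule.sub_mem _ (Submodule.sub_mem _ (hXV2 v hv) ?_) ?_
          · exact Submodule.smul_mem _ _ (Fs_mono p (by omega) hv1)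
          · exact Submodule.smul_mem _ _ (A_shift_Fs p _ hv1)
        have hwGs : ∑ h ∈ Finset.Icc 2 p.d, c h • T h v ∈ TDGs p 2 := by
          refine Submodule.sum_mem _ fun h hh => ?_
          obtain ⟨h2, _⟩ := Finset.mem_Icc.mp hh
          exact Submodule.smul_mem _ _ (Gs_anti p h2 (tau_mem_Gs p h v))
        have hw0 : ∑ h ∈ Finset.Icc 2 p.d, c h • T h v ∈ TDFs p 2 ⊓ TDGs p 2 :=
          ⟨hwFs, hwGs⟩
        rw [fact1 p (by omega : (1:ℕ) ≤ 2)] at hw0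
        simpa using hw0
    | succ j ih =>
        intro v hv
        have hv1 : v ∈ TDFs p 1 := Ew_le_Fs p (by omega) hv
        by_cases hdj : 2 ≤ p.d - j
        · have hpred := ih v hv
          have hsplit := Finset.sum_Icc_succ_top
            (show 2 ≤ (p.d - j - 1)+1 by omega) (fun x => c x • T x v)
          have hmm : (p.d - j - 1)+1 = p.d - j := by omega
          rw [hmm] at hsplit
          have h1 : c (p.d - j) • T (p.d - j) v ∈ TDGs p (p.d - j) :=
            Submodule.smul_mem _ _ (tau_mem_Gs p _ v)
          have h2 : c (p.d - j) • T (p.d - j) v ∈ TDFs p (p.d - j) := by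
            have htop : c (p.d - j) • T (p.d - j) v
                = - ∑ h ∈ Finset.Icc 2 (p.d - j - 1), c h • T h v := by
              rw [hsplit] at hpred
              exact eq_neg_of_add_eq_zero_right hpred
            rw [htop]
            refine Submodule.neg_mem _ (Submodule.sum_mem _ fun h hh => ?_)
            obtain ⟨hh2, hhm⟩ := Finset.mem_Icc.mp hh
            refine Submodule.smul_mem _ _ ?_
            have hmem := tau_mem_Fs p h 1 v hv1
            exact Fs_mono p (by omega) hmem
          have hc0 : c (p.d - j) • T (p.d - j) v = 0 := by
            have hw0 : c (p.d - j) • T (p.d - j) v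
                ∈ TDFs p (p.d - j) ⊓ TDGs p (p.d - j) := ⟨h2, h1⟩
            rw [fact1 p (show 1 ≤ p.d - j by omega)] at hw0
            simpa using hw0
          have hfin : ∑ h ∈ Finset.Icc 2 (p.d - j - 1), c h • T h v = 0 := by
            rw [hsplit, hc0, add_zero] at hpred
            exact hpred
          have hidx : p.d - (j+1) = p.d - j - 1 := by omega
          rw [hidx]
          exact hfin
        · have : Finset.Icc 2 (p.d - (j+1)) = ∅ := Finset.Icc_eq_empty (by omega)
          simp [this]
  have hterm : ∀ h, 2 ≤ h → h ≤ p.d → ∀ v ∈ p.Ew 0, c h • T h v = 0 := by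
    intro h h2 hdh v hv
    have ha := hS (p.d - h) v hv
    have hb := hS (p.d - h + 1) v hv
    have e1 : p.d - (p.d - h) = h := by omega
    have e2 : p.d - (p.d - h + 1) = h - 1 := by omega
    rw [e1] at ha
    rw [e2] at hb
    have hsplit := Finset.sum_Icc_succ_top (show 2 ≤ (h-1)+1 by omega)
      (fun x => c x • T x v)
    have hmm : (h-1)+1 = h := by omega
    rw [hmm] at hsplit
    rw [hsplit, hb, zero_add] at ha
    exact ha
  have hczero : ∀ h, 2 ≤ h → h ≤ p.d → c h = 0 := by
    intro h h2 hdh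
    by_contra hne
    obtain ⟨v0, hv0, hv0ne⟩ := (Submodule.ne_bot_iff _).mp (p.hEw_ne 0 (Nat.zero_le _))
    have hz := hterm h h2 hdh v0 hv0
    have hTz : T h v0 = 0 := by
      rcases smul_eq_zero.mp hz with h' | h'
      · exact absurd h' hne
      · exact h'
    have hmem : v0 ∈ TDFt p h := kerTau p hdh hTz
    have hmem2 : v0 ∈ p.Ew 0 ⊓ TDFt p p.d := ⟨hv0, Ft_mono p hdh hmem⟩
    rw [fact2 p] at hmem2
    exact hv0ne (by simpa using hmem2)
  refine ⟨c 1, c 0 - c 1 * p.θ 0, ?_⟩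
  rw [hXsum]
  have hsub : Finset.range 2 ⊆ Finset.range (p.d+1) := Finset.range_subset_range.mpr (by omega)
  have hred : ∑ h ∈ Finset.range (p.d+1), c h • T h = ∑ h ∈ Finset.range 2, c h • T h :=
    (Finset.sum_subset hsub (fun x hx hnx => by
      have hx2 : 2 ≤ x := by simp [Finset.mem_range, not_lt] at hnx; omega
      have hxd : x ≤ p.d := by have := Finset.mem_range.mp hx; omega
      rw [hczero x hx2 hxd, zero_smul])).symm
  rw [hred, Finset.sum_range_succ, Finset.sum_range_one]
  have hT0e : T 0 = 1 := by
    show aeval p.A (tau p.θ 0) = 1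
    rw [tau]
    simp
  have hT1e : T 1 = p.A - p.θ 0 • 1 := by
    show aeval p.A (tau p.θ 1) = p.A - p.θ 0 • 1
    have htau1 : tau p.θ 1 = Polynomial.X - C (p.θ 0) := by
      rw [tau]; exact Finset.prod_range_one _
    rw [htau1, map_sub, aeval_X, aeval_C, Algebra.algebraMap_eq_smul_one]
  rw [hT0e, hT1e, smul_sub, smul_smul, sub_smul]
  abel
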